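/- The set T(W) of supports of elements of a finite-dimensional subspace W ⊆ K^E is closed under union if and only if the map Ψ_W : Lin(W) → 2^E, L ↦ {i : u^{(i)} ∉ L}, is a bijection onto T(W). -/

import Mathlib

open Submodule Set Function

section Aux
variable {K E : Type*} [Field K] {s : ℕ}
variable {φ : Fin s → (E → K)} {u : E → (Fin s → K)}

lemma aux_mem_W_iff (hu : ∀ j i, u j i = φ i j) (w : E → K) :
    w ∈ span K (range φ) ↔ ∃ f : (Fin s → K) →ₗ[K] K, ∀ j, w j = f (u j) := by
  constructor
  · intro hw
    obtain ⟨c, hc⟩ := (mem_span_range_iff_exists_fun K).mp hw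
    refine ⟨∑ i, c i • LinearMap.proj i, fun j => ?_⟩
    rw [← hc]
    simp only [Finset.sum_apply, Pi.smul_apply, LinearMap.sum_apply, LinearMap.smul_apply,
      LinearMap.proj_apply, smul_eq_mul]
    exact Finset.sum_congr rfl fun i _ => by rw [hu, mul_comm]
  · rintro ⟨f, hf⟩
    rw [mem_span_range_iff_exists_fun K]
    refine ⟨fun i => f (fun k => if i = k then 1 else 0), ?_⟩
    funext j
    rw [Finset.sum_apply, hf j, LinearMap.pi_apply_eq_sum_univ f (u j)]
    exact Finset.sum_congr rfl fun i _ => by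
      simp only [Pi.smul_apply, smul_eq_mul, hu, mul_comm]
end Aux

section Aux2
variable {K E : Type*} [Field K] {s : ℕ}
variable {φ : Fin s → (E → K)} {u : E → (Fin s → K)}

lemma aux_eval (hu : ∀ j i, u j i = φ i j) (f : (Fin s → K) →ₗ[K] K) (j : E) :
    (∑ i, (f fun k => if i = k then 1 else 0) • φ i) j = f (u j) := by
  rw [LinearMap.pi_apply_eq_sum_univ f (u j), Finset.sum_apply]
  exact Finset.sum_congr rfl fun i _ => by
    simp only [Pi.smul_apply, smul_eq_mul, hu, mul_comm]

lemma aux_f_eq_zero (hφ : LinearIndependent K φ) (hu : ∀ j i, u j i = φ i j)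
    (f : (Fin s → K) →ₗ[K] K) (h : ∀ j, f (u j) = 0) : f = 0 := by
  have hc : ∀ i, f (fun k => if i = k then 1 else 0) = 0 := by
    intro i
    have hw : ∑ i, (f (fun k => if i = k then 1 else 0)) • φ i = 0 := by
      funext j
      rw [aux_eval hu f j, h j]; rfl
    exact Fintype.linearIndependent_iff.mp hφ _ hw i
  refine LinearMap.ext fun x => ?_
  rw [LinearMap.pi_apply_eq_sum_univ f x]
  simp [hc]

lemma aux_dual (L : Submodule K (Fin s → K)) {v : Fin s → K} (hv : v ∉ L) :
    ∃ f : (Fin s → K) →ₗ[K] K, (∀ x ∈ L, f x = 0) ∧ f v ≠ 0 := by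
  have hmk : L.mkQ v ≠ 0 := by
    simpa [Submodule.Quotient.mk_eq_zero] using hv
  obtain ⟨g, hg⟩ := not_forall.mp ((not_iff_not.mpr
    (Module.forall_dual_apply_eq_zero_iff K (L.mkQ v))).mpr hmk)
  exact ⟨g.comp L.mkQ, fun x hx => by
    simp [Submodule.mkQ_apply, (Submodule.Quotient.mk_eq_zero L).mpr hx], hg⟩
end Aux2
open Submodule Set Function in
theorem stmt13 {K E : Type*} [Field K] {s : ℕ} (hs : 0 < s)
    (φ : Fin s → (E → K)) (hφ : LinearIndependent K φ)
    (u : E → (Fin s → K)) (hu : ∀ j i, u j i = φ i j) :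
    (∀ S₁ ∈ {S | ∃ w ∈ Submodule.span K (Set.range φ), w ≠ 0 ∧ Function.support w = S},
      ∀ S₂ ∈ {S | ∃ w ∈ Submodule.span K (Set.range φ), w ≠ 0 ∧ Function.support w = S},
        S₁ ∪ S₂ ∈ {S | ∃ w ∈ Submodule.span K (Set.range φ), w ≠ 0 ∧ Function.support w = S}) ↔
    Set.BijOn (fun L : Submodule K (Fin s → K) => {i : E | u i ∉ L})
      {L | L ≠ ⊤ ∧ ∃ X : Set E, L = Submodule.span K (u '' X)}
      {S | ∃ w ∈ Submodule.span K (Set.range φ), w ≠ 0 ∧ Function.support w = S} := by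
  set T : Set (Set E) :=
    {S | ∃ w ∈ Submodule.span K (Set.range φ), w ≠ 0 ∧ Function.support w = S} with hT
  -- basic: span of u-image of a set where f vanishes is ≤ ker f
  have hker : ∀ (f : (Fin s → K) →ₗ[K] K) (Z : Set E), (∀ j ∈ Z, f (u j) = 0) →
      span K (u '' Z) ≤ LinearMap.ker f := by
    intro f Z h
    refine span_le.mpr ?_
    rintro _ ⟨j, hj, rfl⟩
    exact h j hj
  -- nonzero w from nonzero-somewhere f
  have hwT : ∀ f : (Fin s → K) →ₗ[K] K, (∃ j, f (u j) ≠ 0) →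
      {j | f (u j) ≠ 0} ∈ T := by
    intro f ⟨j, hj⟩
    refine ⟨fun j => f (u j), (aux_mem_W_iff hu _).mpr ⟨f, fun _ => rfl⟩, ?_, rfl⟩
    intro h0
    exact hj (congrFun h0 j)
  -- every member of T comes from a functional
  have hTrep : ∀ S ∈ T, ∃ f : (Fin s → K) →ₗ[K] K, (∃ j, f (u j) ≠ 0) ∧
      S = {j | f (u j) ≠ 0} := by
    rintro S ⟨w, hw, hw0, rfl⟩
    obtain ⟨f, hf⟩ := (aux_mem_W_iff hu w).mp hw
    refine ⟨f, ?_, ?_⟩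
    · by_contra h
      push_neg at h
      exact hw0 (funext fun j => (hf j).trans (h j))
    · ext j; simp [Function.mem_support, hf j]
  -- InjOn : always
  have hinj : Set.InjOn (fun L : Submodule K (Fin s → K) => {i : E | u i ∉ L})
      {L | L ≠ ⊤ ∧ ∃ X : Set E, L = Submodule.span K (u '' X)} := by
    have key : ∀ L : Submodule K (Fin s → K), (∃ X : Set E, L = span K (u '' X)) →
        L = span K (u '' {j | u j ∈ L}) := by
      rintro L ⟨X, rfl⟩
      refine le_antisymm (span_le.mpr ?_) (span_le.mpr ?_)
      · rintro _ ⟨x, hx, rfl⟩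
        exact subset_span ⟨x, subset_span ⟨x, hx, rfl⟩, rfl⟩
      · rintro _ ⟨x, hx, rfl⟩
        exact hx
    rintro L₁ ⟨h₁, hX₁⟩ L₂ ⟨h₂, hX₂⟩ heq
    simp only [Set.ext_iff, mem_setOf_eq] at heq
    have : {j | u j ∈ L₁} = {j | u j ∈ L₂} := by
      ext j
      simpa [not_iff_not] using not_iff_not.mpr (heq j)
    rw [key L₁ hX₁, key L₂ hX₂, this]
  -- every L ∈ Lin is span of the u's it contains
  constructor
  · intro hUnion
    refine ⟨?_, hinj, ?_⟩
    · -- MapsTo, the hard direction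
      rintro L ⟨hLtop, X, hLX⟩
      have hLker : ∀ f : (Fin s → K) →ₗ[K] K, (∀ j, u j ∈ L → f (u j) = 0) →
          ∀ x ∈ L, f x = 0 := by
        intro f h x hx
        rw [hLX] at hx
        exact hker f X (fun j hj => h j (by rw [hLX]; exact subset_span ⟨j, hj, rfl⟩)) hx
      have hA : ∃ f : (Fin s → K) →ₗ[K] K, (∀ x ∈ L, f x = 0) ∧ ∃ j, f (u j) ≠ 0 := by
        obtain ⟨v, hv⟩ : ∃ v, v ∉ L := by
          by_contra h
          push_neg at h
          exact hLtop (eq_top_iff.mpr fun x _ => h x)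
        obtain ⟨f, hf0, hfv⟩ := aux_dual L hv
        refine ⟨f, hf0, ?_⟩
        by_contra h
        push_neg at h
        rw [aux_f_eq_zero hφ hu f h] at hfv
        exact hfv rfl
      set D : Set ℕ := {n | ∃ f : (Fin s → K) →ₗ[K] K,
        ((∀ x ∈ L, f x = 0) ∧ ∃ j, f (u j) ≠ 0) ∧
        n = Module.finrank K (span K (u '' {j | f (u j) = 0}))} with hD
      have hDne : D.Nonempty := ⟨_, hA.choose, hA.choose_spec, rfl⟩
      obtain ⟨f, ⟨hfL, hfne⟩, hfd⟩ := Nat.sInf_mem hDne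
      suffices hsupp : {i : E | u i ∉ L} = {j | f (u j) ≠ 0} by
        rw [show (fun L : Submodule K (Fin s → K) => {i : E | u i ∉ L}) L
          = {i : E | u i ∉ L} from rfl, hsupp]
        exact hwT f hfne
      ext j
      simp only [mem_setOf_eq]
      constructor
      · intro hjL
        by_contra hfj
        obtain ⟨f', hf'L, hf'j⟩ := aux_dual L hjL
        obtain ⟨f'', hf''ne, h''⟩ := hTrep _ (hUnion _ (hwT f hfne) _ (hwT f' ⟨j, hf'j⟩))
        have hiff : ∀ k, f'' (u k) = 0 ↔ (f (u k) = 0 ∧ f' (u k) = 0) := by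
          intro k
          have h3 := Set.ext_iff.mp h'' k
          simp only [mem_union, mem_setOf_eq] at h3
          tauto
        have hf''j : f'' (u j) ≠ 0 := fun h0 => hf'j ((hiff j).mp h0).2
        have hf''L : ∀ x ∈ L, f'' x = 0 :=
          hLker f'' (fun k hk => (hiff k).mpr ⟨hfL _ hk, hf'L _ hk⟩)
        have hlt : span K (u '' {k | f'' (u k) = 0}) < span K (u '' {k | f (u k) = 0}) := by
          refine lt_of_le_of_ne (span_mono (image_mono (f := u) fun k hk => ((hiff k).mp hk).1)) ?_
          intro heq
          have h1 : u j ∈ span K (u '' {k | f (u k) = 0}) := subset_span ⟨j, hfj, rfl⟩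
          have h2 : u j ∉ span K (u '' {k | f'' (u k) = 0}) := fun hmem =>
            hf''j (hker f'' _ (fun k hk => hk) hmem)
          rw [heq] at h2
          exact h2 h1
        have hfin := Submodule.finrank_lt_finrank_of_lt hlt
        have hmem : Module.finrank K (span K (u '' {k | f'' (u k) = 0})) ∈ D :=
          ⟨f'', ⟨hf''L, ⟨j, hf''j⟩⟩, rfl⟩
        have hle := Nat.sInf_le hmem
        omega
      · intro hfj hjL
        exact hfj (hfL _ hjL)
    · -- SurjOn : always
      rintro S hS
      obtain ⟨f, ⟨j0, hj0⟩, rfl⟩ := hTrep S hS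
      refine ⟨span K (u '' {j | f (u j) = 0}), ⟨?_, {j | f (u j) = 0}, rfl⟩, ?_⟩
      · intro htop
        exact hj0 (hker f _ (fun j hj => hj) (htop ▸ mem_top))
      · ext j
        simp only [mem_setOf_eq]
        constructor
        · intro hnot h0
          exact hnot (subset_span ⟨j, h0, rfl⟩)
        · intro hne hmem
          exact hne (hker f _ (fun k hk => hk) hmem)
  · intro hbij S₁ hS₁ S₂ hS₂
    obtain ⟨f₁, ⟨j₁, hj₁⟩, rfl⟩ := hTrep S₁ hS₁
    obtain ⟨f₂, ⟨j₂, hj₂⟩, rfl⟩ := hTrep S₂ hS₂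
    have htop : span K (u '' {j | f₁ (u j) = 0 ∧ f₂ (u j) = 0}) ≠ ⊤ := by
      intro htop
      exact hj₁ (hker f₁ _ (fun k hk => hk.1) (htop ▸ mem_top))
    have hmem : span K (u '' {j | f₁ (u j) = 0 ∧ f₂ (u j) = 0}) ∈
        {L : Submodule K (Fin s → K) | L ≠ ⊤ ∧ ∃ X : Set E, L = span K (u '' X)} :=
      ⟨htop, _, rfl⟩
    have hmt := hbij.mapsTo hmem
    convert hmt using 1
    ext j
    simp only [mem_union, mem_setOf_eq]
    constructor
    · rintro (h | h) hmem'
      · exact h (hker f₁ _ (fun k hk => hk.1) hmem')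
      · exact h (hker f₂ _ (fun k hk => hk.2) hmem')
    · intro h
      by_contra hc
      push_neg at hc
      exact h (subset_span ⟨j, ⟨hc.1, hc.2⟩, rfl⟩)
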